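/- Let S be an STS(v) with a strict k-bicoloring with color class sizes n₁,…,n_k. Suppose there exist distinct indices i, j with n_i + n_j = (v+1)/2 and (v+1)/2 even. Then there exists an STS(2v+1), obtained from S by a doubling construction, admitting an extended strict k-bicoloring (every triple still receives exactly two colors, and the v+1 new points are colored with the original k colors). -/

import Mathlib

open Finset

section part2
-- assume part1 names: pair_eq two_inj oedges mem_oedges oedges_card oedges_vertex oedges_edge

lemma pair_eq {β : Type*} [DecidableEq β] {a b c d : β} (h : ({a,b} : Finset β) = {c,d}) :
    (a = c ∧ b = d) ∨ (a = d ∧ b = c) := by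
  have ha : a ∈ ({c,d} : Finset β) := by rw [← h]; simp
  have hb : b ∈ ({c,d} : Finset β) := by rw [← h]; simp
  have hc : c ∈ ({a,b} : Finset β) := by rw [h]; simp
  have hd : d ∈ ({a,b} : Finset β) := by rw [h]; simp
  simp only [mem_insert, mem_singleton] at ha hb hc hd
  rcases ha with rfl | rfl
  · rcases hd with rfl | rfl <;> tauto
  · rcases hc with rfl | rfl <;> tauto

lemma two_inj (r : ℕ) {a b : ZMod (2*r+1)} (h : 2*a = 2*b) : a = b := by
  have h0 : (2*(r : ZMod (2*r+1))+1) = 0 := by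
    have h1 := ZMod.natCast_self (2*r+1)
    push_cast at h1
    linear_combination h1
  linear_combination ((r : ZMod (2*r+1))+1)*h - (a-b)*h0

def oedges (r : ℕ) (u : ZMod (2*r+1)) : Finset (Finset (Option (ZMod (2*r+1)))) :=
  insert {none, some u}
    ((Finset.univ.filter (fun x => x ≠ u)).image fun x => {some x, some (2*u - x)})

lemma mem_oedges {r : ℕ} {u : ZMod (2*r+1)} {e : Finset (Option (ZMod (2*r+1)))} :
    e ∈ oedges r u ↔ e = {none, some u} ∨ ∃ x, x ≠ u ∧ e = {some x, some (2*u - x)} := by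
  simp only [oedges, mem_insert, mem_image, mem_filter, mem_univ, true_and]
  constructor
  · rintro (h | ⟨x, hx, h⟩)
    · exact Or.inl h
    · exact Or.inr ⟨x, hx, h.symm⟩
  · rintro (h | ⟨x, hx, h⟩)
    · exact Or.inl h
    · exact Or.inr ⟨x, hx, h.symm⟩

lemma oedges_card {r : ℕ} {u : ZMod (2*r+1)} {e : Finset (Option (ZMod (2*r+1)))}
    (he : e ∈ oedges r u) : e.card = 2 := by
  rw [mem_oedges] at he
  rcases he with rfl | ⟨x, hx, rfl⟩
  · rw [card_pair]; simp
  · rw [card_pair]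
    intro h
    apply hx
    apply two_inj r
    have : (x : ZMod (2*r+1)) = 2*u - x := Option.some_injective _ h
    linear_combination this

lemma oedges_vertex (r : ℕ) (u : ZMod (2*r+1)) (p : Option (ZMod (2*r+1))) :
    ∃! e, e ∈ oedges r u ∧ p ∈ e := by
  rcases p with _ | x
  · refine ⟨{none, some u}, ⟨by rw [mem_oedges]; left; rfl, by simp⟩, ?_⟩
    rintro e ⟨he, hp⟩
    rw [mem_oedges] at he
    rcases he with rfl | ⟨x, hx, rfl⟩
    · rfl
    · simp at hp
  · by_cases hxu : x = u
    · subst hxu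
      refine ⟨{none, some x}, ⟨by rw [mem_oedges]; left; rfl, by simp⟩, ?_⟩
      rintro e ⟨he, hp⟩
      rw [mem_oedges] at he
      rcases he with rfl | ⟨y, hy, rfl⟩
      · rfl
      · exfalso; apply hy
        simp only [mem_insert, mem_singleton, Option.some.injEq] at hp
        rcases hp with h | h
        · exact h.symm
        · apply two_inj r; linear_combination 2*h
    · refine ⟨{some x, some (2*u - x)}, ⟨by rw [mem_oedges]; right; exact ⟨x, hxu, rfl⟩,
        by simp⟩, ?_⟩
      rintro e ⟨he, hp⟩
      rw [mem_oedges] at he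
      rcases he with rfl | ⟨y, hy, rfl⟩
      · exfalso
        simp only [mem_insert, mem_singleton, Option.some.injEq] at hp
        rcases hp with h | h
        · exact absurd h (by simp)
        · exact hxu h
      · simp only [mem_insert, mem_singleton, Option.some.injEq] at hp
        rcases hp with rfl | h
        · rfl
        · have hyx : y = 2*u - x := by linear_combination h
          subst hyx
          rw [Finset.pair_comm]
          congr 2
          ring

lemma oedges_edge (r : ℕ) (e : Finset (Option (ZMod (2*r+1)))) (he : e.card = 2) :
    ∃! u, e ∈ oedges r u := by
  obtain ⟨p, q, hpq, rfl⟩ := Finset.card_eq_two.mp he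
  by_cases hn : (none : Option (ZMod (2*r+1))) ∈ ({p, q} : Finset (Option (ZMod (2*r+1))))
  · obtain ⟨y, hy⟩ : ∃ y, ({p, q} : Finset (Option (ZMod (2*r+1)))) = {none, some y} := by
      rcases p with _ | x
      · rcases q with _ | y
        · exact absurd rfl hpq
        · exact ⟨y, rfl⟩
      · rcases q with _ | y
        · exact ⟨x, Finset.pair_comm _ _⟩
        · simp at hn
    rw [hy]
    have hmem : ({none, some y} : Finset (Option (ZMod (2*r+1)))) ∈ oedges r y := by
      rw [mem_oedges]; left; rfl
    refine ⟨y, hmem, ?_⟩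
    intro u' hu'
    rw [mem_oedges] at hu'
    rcases hu' with h | ⟨z, hz, h⟩
    · have h2 : (some y : Option (ZMod (2*r+1))) ∈ ({none, some u'} : Finset (Option (ZMod (2*r+1)))) := by
        rw [← h]; simp
      simp only [mem_insert, mem_singleton] at h2
      rcases h2 with h2 | h2
      · exact absurd h2 (by simp)
      · exact (Option.some_injective _ h2).symm
    · have h2 : (none : Option (ZMod (2*r+1))) ∈ ({some z, some (2*u'-z)} : Finset (Option (ZMod (2*r+1)))) := by
        rw [← h]; simp
      simp at h2
  · obtain ⟨x, rfl⟩ : ∃ x, p = some x := by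
      rcases p with _ | x
      · simp at hn
      · exact ⟨x, rfl⟩
    obtain ⟨y, rfl⟩ : ∃ y, q = some y := by
      rcases q with _ | y
      · simp at hn
      · exact ⟨y, rfl⟩
    have hxy : x ≠ y := fun h => hpq (by rw [h])
    have h1 : (2*(r : ZMod (2*r+1))+2) = 1 := by
      have h1 := ZMod.natCast_self (2*r+1)
      push_cast at h1
      linear_combination h1
    have h2u0 : 2*(((r : ZMod (2*r+1))+1)*(x+y)) = x + y := by linear_combination (x+y)*h1
    have hxu0 : x ≠ ((r : ZMod (2*r+1))+1)*(x+y) := by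
      intro h
      have h2x : 2*x = x + y := by
        conv_lhs => rw [h]
        exact h2u0
      exact hxy (by linear_combination h2x)
    have hrw : 2*(((r : ZMod (2*r+1))+1)*(x+y)) - x = y := by linear_combination h2u0
    have hmem : ({some x, some y} : Finset (Option (ZMod (2*r+1)))) ∈
        oedges r (((r : ZMod (2*r+1))+1)*(x+y)) := by
      rw [mem_oedges]; right; exact ⟨x, hxu0, by rw [hrw]⟩
    refine ⟨((r : ZMod (2*r+1))+1)*(x+y), hmem, ?_⟩
    intro u' hu'
    rw [mem_oedges] at hu'
    rcases hu' with h | ⟨z, hz, h⟩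
    · have h2 : (none : Option (ZMod (2*r+1))) ∈ ({some x, some y} : Finset (Option (ZMod (2*r+1)))) := by
        rw [h]; simp
      simp at h2
    · have hsum : x + y = 2*u' := by
        rcases pair_eq h with ⟨ha, hb⟩ | ⟨ha, hb⟩ <;>
        · have ha' := Option.some_injective _ ha
          have hb' := Option.some_injective _ hb
          subst ha'
          linear_combination hb'
      apply two_inj r
      rw [h2u0]
      exact hsum.symm

abbrev Pt (r : ℕ) := Fin 2 × ZMod (2*r+2)

lemma fin2 (c : Fin 2) : c = 0 ∨ c = 1 := by fin_cases c <;> simp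

noncomputable def gam (r : ℕ) : Option (ZMod (2*r+1)) ≃ ZMod (2*r+2) :=
  Fintype.equivOfCardEq (by rw [Fintype.card_option, ZMod.card, ZMod.card])

noncomputable def side (r : ℕ) (c : Fin 2) : Option (ZMod (2*r+1)) → Pt r :=
  fun o => (c, gam r o)

lemma side_inj (r : ℕ) (c : Fin 2) : Function.Injective (side r c) :=
  fun a b h => (gam r).injective (congrArg Prod.snd h)

noncomputable def bfac (r : ℕ) (t : ZMod (2*r+2)) : Finset (Finset (Pt r)) :=
  Finset.univ.image (fun y => ({(0,y),(1,y+t)} : Finset (Pt r)))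

noncomputable def wfac (r : ℕ) (u : ZMod (2*r+1)) : Finset (Finset (Pt r)) :=
  ((oedges r u).image (Finset.image (side r 0))) ∪
  ((oedges r u).image (Finset.image (side r 1)))

lemma mem_bfac {r : ℕ} {t : ZMod (2*r+2)} {e : Finset (Pt r)} :
    e ∈ bfac r t ↔ ∃ y, e = ({(0,y),(1,y+t)} : Finset (Pt r)) := by
  simp only [bfac, mem_image, mem_univ, true_and]
  constructor
  · rintro ⟨y, h⟩; exact ⟨y, h.symm⟩
  · rintro ⟨y, h⟩; exact ⟨y, h.symm⟩

lemma mem_wfac {r : ℕ} {u : ZMod (2*r+1)} {e : Finset (Pt r)} :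
    e ∈ wfac r u ↔ ∃ c e0, e0 ∈ oedges r u ∧ e = e0.image (side r c) := by
  simp only [wfac, mem_union, mem_image]
  constructor
  · rintro (⟨e0, h1, h2⟩ | ⟨e0, h1, h2⟩)
    · exact ⟨0, e0, h1, h2.symm⟩
    · exact ⟨1, e0, h1, h2.symm⟩
  · rintro ⟨c, e0, h1, h2⟩
    rcases fin2 c with rfl | rfl
    · exact Or.inl ⟨e0, h1, h2.symm⟩
    · exact Or.inr ⟨e0, h1, h2.symm⟩

lemma bfac_card {r : ℕ} {t : ZMod (2*r+2)} {e : Finset (Pt r)} (he : e ∈ bfac r t) :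
    e.card = 2 := by
  rw [mem_bfac] at he
  obtain ⟨y, rfl⟩ := he
  rw [card_pair]
  intro h
  have := congrArg Prod.fst h
  simp at this

lemma wfac_card {r : ℕ} {u : ZMod (2*r+1)} {e : Finset (Pt r)} (he : e ∈ wfac r u) :
    e.card = 2 := by
  rw [mem_wfac] at he
  obtain ⟨c, e0, h1, rfl⟩ := he
  rw [Finset.card_image_of_injective _ (side_inj r c)]
  exact oedges_card h1

lemma wfac_fst {r : ℕ} {u : ZMod (2*r+1)} {e : Finset (Pt r)} (he : e ∈ wfac r u) :
    ∃ c, ∀ q ∈ e, q.1 = c := by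
  rw [mem_wfac] at he
  obtain ⟨c, e0, h1, rfl⟩ := he
  refine ⟨c, ?_⟩
  intro q hq
  rw [mem_image] at hq
  obtain ⟨o, _, rfl⟩ := hq
  rfl

lemma bfac_vertex (r : ℕ) (t : ZMod (2*r+2)) (q : Pt r) :
    ∃! e, e ∈ bfac r t ∧ q ∈ e := by
  obtain ⟨c, z⟩ := q
  rcases fin2 c with rfl | rfl
  · refine ⟨{(0,z),(1,z+t)}, ⟨mem_bfac.mpr ⟨z, rfl⟩, by simp⟩, ?_⟩
    rintro e ⟨he, hq⟩
    rw [mem_bfac] at he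
    obtain ⟨y, rfl⟩ := he
    simp only [mem_insert, mem_singleton, Prod.mk.injEq] at hq
    rcases hq with ⟨-, rfl⟩ | ⟨h01, -⟩
    · rfl
    · exact absurd h01 (by decide)
  · refine ⟨{(0,z-t),(1,z)}, ⟨mem_bfac.mpr ⟨z-t, by rw [show z-t+t = z from by ring]⟩,
      by simp⟩, ?_⟩
    rintro e ⟨he, hq⟩
    rw [mem_bfac] at he
    obtain ⟨y, rfl⟩ := he
    simp only [mem_insert, mem_singleton, Prod.mk.injEq] at hq
    rcases hq with ⟨h01, -⟩ | ⟨-, hz⟩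
    · exact absurd h01 (by decide)
    · have : y = z - t := by linear_combination - hz
      subst this
      rw [show z - t + t = z from by ring]

lemma wfac_vertex (r : ℕ) (u : ZMod (2*r+1)) (q : Pt r) :
    ∃! e, e ∈ wfac r u ∧ q ∈ e := by
  obtain ⟨c, z⟩ := q
  obtain ⟨e0, ⟨he0, ho⟩, huniq⟩ := oedges_vertex r u ((gam r).symm z)
  refine ⟨e0.image (side r c), ⟨mem_wfac.mpr ⟨c, e0, he0, rfl⟩, ?_⟩, ?_⟩
  · rw [mem_image]
    exact ⟨(gam r).symm z, ho, by simp [side, Equiv.apply_symm_apply]⟩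
  · rintro e ⟨he, hq⟩
    rw [mem_wfac] at he
    obtain ⟨c', e0', he0', rfl⟩ := he
    rw [mem_image] at hq
    obtain ⟨o', ho', hside⟩ := hq
    have hc : c' = c := congrArg Prod.fst hside
    have hoz : o' = (gam r).symm z := by
      have := congrArg Prod.snd hside
      simp only [side] at this
      rw [← this, Equiv.symm_apply_apply]
    subst hc
    have : e0' = e0 := huniq e0' ⟨he0', hoz ▸ ho'⟩
    rw [this]

noncomputable def pfac (r : ℕ) : ZMod (2*r+2) ⊕ ZMod (2*r+1) → Finset (Finset (Pt r))
  | Sum.inl t => bfac r t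
  | Sum.inr u => wfac r u

lemma pfac_inl (r : ℕ) (t : ZMod (2*r+2)) : pfac r (Sum.inl t) = bfac r t := rfl
lemma pfac_inr (r : ℕ) (u : ZMod (2*r+1)) : pfac r (Sum.inr u) = wfac r u := rfl

lemma pfac_card {r : ℕ} {idx} {e : Finset (Pt r)} (he : e ∈ pfac r idx) : e.card = 2 := by
  cases idx with
  | inl t => exact bfac_card he
  | inr u => exact wfac_card he

lemma pfac_vertex (r : ℕ) (idx) (q : Pt r) : ∃! e, e ∈ pfac r idx ∧ q ∈ e := by
  cases idx with
  | inl t => exact bfac_vertex r t q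
  | inr u => exact wfac_vertex r u q

lemma pfac_edge (r : ℕ) (e : Finset (Pt r)) (he : e.card = 2) :
    ∃! idx, e ∈ pfac r idx := by
  obtain ⟨p, q, hpq, rfl⟩ := Finset.card_eq_two.mp he
  obtain ⟨c1, z1⟩ := p
  obtain ⟨c2, z2⟩ := q
  by_cases hc : c1 = c2
  · -- within edge
    subst hc
    have hz : z1 ≠ z2 := fun h => hpq (by rw [h])
    have hcard : ({(gam r).symm z1, (gam r).symm z2} : Finset (Option (ZMod (2*r+1)))).card = 2 := by
      rw [card_pair]
      exact fun h => hz ((gam r).symm.injective h)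
    obtain ⟨u0, hu0, huniq⟩ := oedges_edge r _ hcard
    have himg : ({(gam r).symm z1, (gam r).symm z2} : Finset (Option (ZMod (2*r+1)))).image
        (side r c1) = {(c1, z1), (c1, z2)} := by
      rw [image_insert, image_singleton]
      simp [side, Equiv.apply_symm_apply]
    refine ⟨Sum.inr u0, mem_wfac.mpr ⟨c1, _, hu0, himg.symm⟩, ?_⟩
    rintro (t' | u') hidx
    · exfalso
      rw [pfac_inl, mem_bfac] at hidx
      obtain ⟨y, hy⟩ := hidx
      have h0 : ((0 : Fin 2), y) ∈ ({(c1, z1), (c1, z2)} : Finset (Pt r)) := by rw [hy]; simp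
      have h1 : ((1 : Fin 2), y + t') ∈ ({(c1, z1), (c1, z2)} : Finset (Pt r)) := by
        rw [hy]; simp
      simp only [mem_insert, mem_singleton, Prod.mk.injEq] at h0 h1
      have e0 : (0 : Fin 2) = c1 := by tauto
      have e1 : (1 : Fin 2) = c1 := by tauto
      rw [← e0] at e1
      exact absurd e1 (by decide)
    · rw [pfac_inr, mem_wfac] at hidx
      obtain ⟨c', e0', he0', heq⟩ := hidx
      have hmem1 : ((c1 : Fin 2), z1) ∈ e0'.image (side r c') := by rw [← heq]; simp
      rw [mem_image] at hmem1
      obtain ⟨o, _, hso⟩ := hmem1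
      have hc' : c' = c1 := congrArg Prod.fst hso
      subst hc'
      have he0eq : e0' = {(gam r).symm z1, (gam r).symm z2} := by
        apply Finset.image_injective (side_inj r c')
        rw [← heq, himg]
      rw [he0eq] at he0'
      rw [huniq u' he0']
  · -- bipartite edge
    obtain ⟨y1, y2, hpair⟩ : ∃ y1 y2,
        ({(c1,z1),(c2,z2)} : Finset (Pt r)) = {(0,y1),(1,y2)} := by
      rcases fin2 c1 with rfl | rfl <;> rcases fin2 c2 with rfl | rfl
      · exact absurd rfl hc
      · exact ⟨z1, z2, rfl⟩
      · exact ⟨z2, z1, Finset.pair_comm _ _⟩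
      · exact absurd rfl hc
    rw [hpair]
    refine ⟨Sum.inl (y2 - y1), mem_bfac.mpr ⟨y1, by rw [show y1 + (y2 - y1) = y2 from by ring]⟩, ?_⟩
    rintro (t' | u') hidx
    · rw [pfac_inl, mem_bfac] at hidx
      obtain ⟨y, hy⟩ := hidx
      have h0 : ((0 : Fin 2), y1) ∈ ({(0,y),(1,y+t')} : Finset (Pt r)) := by rw [← hy]; simp
      have h1 : ((1 : Fin 2), y2) ∈ ({(0,y),(1,y+t')} : Finset (Pt r)) := by rw [← hy]; simp
      simp only [mem_insert, mem_singleton, Prod.mk.injEq] at h0 h1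
      rcases h0 with ⟨-, rfl⟩ | ⟨h01, -⟩
      · rcases h1 with ⟨h10, -⟩ | ⟨-, hyt⟩
        · exact absurd h10 (by decide)
        · rw [show t' = y2 - y1 from by linear_combination - hyt]
      · exact absurd h01 (by decide)
    · exfalso
      rw [pfac_inr] at hidx
      obtain ⟨c, hcst⟩ := wfac_fst hidx
      have h0 : (0 : Fin 2) = c := hcst (0, y1) (by simp)
      have h1 : (1 : Fin 2) = c := hcst (1, y2) (by simp)
      rw [← h0] at h1
      exact absurd h1 (by decide)
end part2

def isSTS {α : Type*} [DecidableEq α] (V : Finset α) (B : Finset (Finset α)) : Prop :=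
  (∀ T ∈ B, T ⊆ V ∧ T.card = 3) ∧
  ∀ p : Finset α, p ⊆ V → p.card = 2 → ∃! T, T ∈ B ∧ p ⊆ T

def isOneFactorization {α : Type*} [DecidableEq α] {v : ℕ}
    (X : Finset α) (F : Fin v → Finset (Finset α)) : Prop :=
  (∀ i, ∀ e ∈ F i, e ⊆ X ∧ e.card = 2) ∧
  (∀ i, ∀ x ∈ X, ∃! e, e ∈ F i ∧ x ∈ e) ∧
  (∀ e : Finset α, e ⊆ X → e.card = 2 → ∃! i, e ∈ F i)

def doublingBlocks {α : Type*} [DecidableEq α] {v : ℕ}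
    (a : Fin v → α) (F : Fin v → Finset (Finset α)) : Finset (Finset α) :=
  Finset.univ.biUnion fun i => (F i).image fun e => insert (a i) e

def isStrictBicoloring {α : Type*} [DecidableEq α] {k : ℕ}
    (V : Finset α) (B : Finset (Finset α)) (φ : α → Fin k) : Prop :=
  (∀ T ∈ B, (T.image φ).card = 2) ∧ ∀ i : Fin k, ∃ x ∈ V, φ x = i

theorem stmt_9 {α : Type*} [DecidableEq α] (v k m : ℕ)
    (V : Finset α) (B : Finset (Finset α)) (hV : V.card = v) (hSTS : isSTS V B)
    (φ : α → Fin k) (hφ : isStrictBicoloring V B φ)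
    (n : Fin k → ℕ) (hn : ∀ i, (V.filter fun x => φ x = i).card = n i)
    (i j : Fin k) (hij : i ≠ j)
    (hm : v + 1 = 2 * m) (hsum : n i + n j = m) (hmeven : Even m) :
    -- a doubled system on `α ⊕ Fin (v+1)`; the new points are the `Sum.inr`s
    ∃ (F : Fin v → Finset (Finset (α ⊕ Fin (v + 1))))
      (a : Fin v → α ⊕ Fin (v + 1)) (ψ : α ⊕ Fin (v + 1) → Fin k),
      Function.Injective a ∧
      V.image Sum.inl = Finset.image a Finset.univ ∧
      isOneFactorization ((Finset.univ : Finset (Fin (v + 1))).image Sum.inr) F ∧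
      isSTS (V.image Sum.inl ∪ (Finset.univ : Finset (Fin (v + 1))).image Sum.inr)
        (B.image (Finset.image Sum.inl) ∪ doublingBlocks a F) ∧
      isStrictBicoloring
        (V.image Sum.inl ∪ (Finset.univ : Finset (Fin (v + 1))).image Sum.inr)
        (B.image (Finset.image Sum.inl) ∪ doublingBlocks a F) ψ ∧
      (∀ x ∈ V, ψ (Sum.inl x) = φ x) := by
  classical
  -- arithmetic setup
  obtain ⟨r, hr⟩ : ∃ r, m = 2*r+2 := by
    obtain ⟨q, hq⟩ := hmeven
    have hm0 : m ≠ 0 := by rintro rfl; omega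
    exact ⟨q - 1, by omega⟩
  have hv : v = 4*r+3 := by omega
  -- color classes
  set V1 : Finset α := V.filter (fun x => φ x = i ∨ φ x = j) with hV1def
  set V2 : Finset α := V.filter (fun x => ¬(φ x = i ∨ φ x = j)) with hV2def
  have hV1card : V1.card = 2*r+2 := by
    have hdisj : Disjoint (V.filter (fun x => φ x = i)) (V.filter (fun x => φ x = j)) := by
      rw [Finset.disjoint_left]
      intro x hx1 hx2
      rw [Finset.mem_filter] at hx1 hx2
      exact hij (by rw [← hx1.2, hx2.2])
    have hsplit : V1 = V.filter (fun x => φ x = i) ∪ V.filter (fun x => φ x = j) := by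
      rw [hV1def, Finset.filter_or]
    rw [hsplit, Finset.card_union_of_disjoint hdisj, hn i, hn j]
    omega
  have hV2card : V2.card = 2*r+1 := by
    have h12 : V1.card + V2.card = V.card :=
      Finset.card_filter_add_card_filter_not (p := fun x => φ x = i ∨ φ x = j)
    omega
  -- equivalences
  obtain ⟨e1⟩ : Nonempty ({x // x ∈ V1} ≃ ZMod (2*r+2)) :=
    ⟨Fintype.equivOfCardEq (by rw [Fintype.card_coe, hV1card, ZMod.card])⟩
  obtain ⟨e2⟩ : Nonempty ({x // x ∈ V2} ≃ ZMod (2*r+1)) :=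
    ⟨Fintype.equivOfCardEq (by rw [Fintype.card_coe, hV2card, ZMod.card])⟩
  obtain ⟨π⟩ : Nonempty (Pt r ≃ Fin (v+1)) :=
    ⟨Fintype.equivOfCardEq (by
      rw [Fintype.card_prod, Fintype.card_fin, ZMod.card, Fintype.card_fin]; omega)⟩
  obtain ⟨σ⟩ : Nonempty ((ZMod (2*r+2) ⊕ ZMod (2*r+1)) ≃ Fin v) :=
    ⟨Fintype.equivOfCardEq (by
      rw [Fintype.card_sum, ZMod.card, ZMod.card, Fintype.card_fin]; omega)⟩
  -- the data
  set a' : ZMod (2*r+2) ⊕ ZMod (2*r+1) → α :=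
    Sum.elim (fun t => (e1.symm t).1) (fun u => (e2.symm u).1) with ha'def
  set a : Fin v → α ⊕ Fin (v+1) := fun idx => Sum.inl (a' (σ.symm idx)) with hadef
  set ι : Pt r → α ⊕ Fin (v+1) := fun p => Sum.inr (π p) with hιdef
  set F : Fin v → Finset (Finset (α ⊕ Fin (v+1))) :=
    fun idx => (pfac r (σ.symm idx)).image (Finset.image ι) with hFdef
  set ψ : α ⊕ Fin (v+1) → Fin k :=
    Sum.elim φ (fun y => if (π.symm y).1 = 0 then i else j) with hψdef
  -- basic app lemmas
  have ha'inl : ∀ t, a' (Sum.inl t) = (e1.symm t).1 := fun t => by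
    simp only [ha'def, Sum.elim_inl]
  have ha'inr : ∀ u, a' (Sum.inr u) = (e2.symm u).1 := fun u => by
    simp only [ha'def, Sum.elim_inr]
  have haapp : ∀ idx : Fin v, a idx = Sum.inl (a' (σ.symm idx)) := fun idx => by
    simp only [hadef]
  have hιapp : ∀ q : Pt r, ι q = Sum.inr (π q) := fun q => by simp only [hιdef]
  have haF : ∀ idx : Fin v, F idx = (pfac r (σ.symm idx)).image (Finset.image ι) :=
    fun idx => by simp only [hFdef]
  have hψinl : ∀ z, ψ (Sum.inl z) = φ z := fun z => by simp only [hψdef, Sum.elim_inl]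
  have hψι : ∀ q : Pt r, ψ (ι q) = if q.1 = 0 then i else j := fun q => by
    simp only [hψdef, hιdef, Sum.elim_inr, Equiv.symm_apply_apply]
  have hιinj : Function.Injective ι := by
    intro p q h
    rw [hιapp, hιapp] at h
    exact π.injective (Sum.inr_injective h)
  -- membership facts for a'
  have ha'V : ∀ idx, a' idx ∈ V := by
    rintro (t | u)
    · rw [ha'inl]
      exact (Finset.mem_filter.mp (e1.symm t).2).1
    · rw [ha'inr]
      exact (Finset.mem_filter.mp (e2.symm u).2).1
  have ha'cond1 : ∀ t, φ (a' (Sum.inl t)) = i ∨ φ (a' (Sum.inl t)) = j := by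
    intro t
    rw [ha'inl]
    exact (Finset.mem_filter.mp (e1.symm t).2).2
  have ha'cond2 : ∀ u, ¬(φ (a' (Sum.inr u)) = i ∨ φ (a' (Sum.inr u)) = j) := by
    intro u
    rw [ha'inr]
    exact (Finset.mem_filter.mp (e2.symm u).2).2
  have ha'inj : Function.Injective a' := by
    rintro (t1 | u1) (t2 | u2) h
    · rw [ha'inl, ha'inl] at h
      exact congrArg Sum.inl (e1.symm.injective (Subtype.ext h))
    · exact absurd (by rw [← h]; exact ha'cond1 t1) (ha'cond2 u2)
    · exact absurd (by rw [h]; exact ha'cond1 t2) (ha'cond2 u1)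
    · rw [ha'inr, ha'inr] at h
      exact congrArg Sum.inr (e2.symm.injective (Subtype.ext h))
  have ha'rep : ∀ x ∈ V, ∃! idx, a' idx = x := by
    intro x hx
    by_cases hcx : φ x = i ∨ φ x = j
    · have hx1 : x ∈ V1 := Finset.mem_filter.mpr ⟨hx, hcx⟩
      refine ⟨Sum.inl (e1 ⟨x, hx1⟩), ?_, ?_⟩
      · show a' (Sum.inl (e1 ⟨x, hx1⟩)) = x
        rw [ha'inl, Equiv.symm_apply_apply]
      · intro idx' h'
        apply ha'inj
        rw [h', ha'inl, Equiv.symm_apply_apply]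
    · have hx2 : x ∈ V2 := Finset.mem_filter.mpr ⟨hx, hcx⟩
      refine ⟨Sum.inr (e2 ⟨x, hx2⟩), ?_, ?_⟩
      · show a' (Sum.inr (e2 ⟨x, hx2⟩)) = x
        rw [ha'inr, Equiv.symm_apply_apply]
      · intro idx' h'
        apply ha'inj
        rw [h', ha'inr, Equiv.symm_apply_apply]
  -- doubling blocks membership
  have hDB : ∀ T, T ∈ doublingBlocks a F ↔
      ∃ idx e0, e0 ∈ pfac r (σ.symm idx) ∧ T = insert (a idx) (Finset.image ι e0) := by
    intro T
    simp only [doublingBlocks, Finset.mem_biUnion, Finset.mem_univ, true_and,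
      Finset.mem_image]
    constructor
    · rintro ⟨idx, e, he, rfl⟩
      rw [haF, Finset.mem_image] at he
      obtain ⟨e0, he0, rfl⟩ := he
      exact ⟨idx, e0, he0, rfl⟩
    · rintro ⟨idx, e0, he0, rfl⟩
      exact ⟨idx, Finset.image ι e0, by rw [haF, Finset.mem_image]; exact ⟨e0, he0, rfl⟩, rfl⟩
  have hnotmem : ∀ (idx : Fin v) (e0 : Finset (Pt r)), a idx ∉ Finset.image ι e0 := by
    intro idx e0 h
    rw [Finset.mem_image] at h
    obtain ⟨q, -, hq⟩ := h
    rw [hιapp, haapp] at hq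
    exact absurd hq (by simp)
  have hinl_in : ∀ (x : α) (idx : Fin v) (e0 : Finset (Pt r)),
      Sum.inl x ∈ insert (a idx) (Finset.image ι e0) → Sum.inl x = a idx := by
    intro x idx e0 h
    rcases Finset.mem_insert.mp h with h | h
    · exact h
    · exfalso
      rw [Finset.mem_image] at h
      obtain ⟨q, -, hq⟩ := h
      rw [hιapp] at hq
      exact absurd hq (by simp)
  have hinr_in : ∀ (y : Fin (v+1)) (idx : Fin v) (e0 : Finset (Pt r)),
      Sum.inr y ∈ insert (a idx) (Finset.image ι e0) →
        ∃ q ∈ e0, q = π.symm y := by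
    intro y idx e0 h
    rcases Finset.mem_insert.mp h with h | h
    · rw [haapp] at h
      exact absurd h (by simp)
    · rw [Finset.mem_image] at h
      obtain ⟨q, hq, hik⟩ := h
      rw [hιapp] at hik
      have hy := Sum.inr_injective hik
      exact ⟨q, hq, by rw [← hy, Equiv.symm_apply_apply]⟩
  have himgpair : ∀ y1 y2 : Fin (v+1),
      Finset.image ι ({π.symm y1, π.symm y2} : Finset (Pt r)) = {Sum.inr y1, Sum.inr y2} := by
    intro y1 y2
    rw [Finset.image_insert, Finset.image_singleton, hιapp, hιapp,
      Equiv.apply_symm_apply, Equiv.apply_symm_apply]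
  -- unique pair coverage lemmas
  have key_old : ∀ x1 ∈ V, ∀ x2 ∈ V, x1 ≠ x2 → ∃! T,
      T ∈ (B.image (Finset.image Sum.inl) ∪ doublingBlocks a F) ∧
        ({Sum.inl x1, Sum.inl x2} : Finset (α ⊕ Fin (v+1))) ⊆ T := by
    intro x1 hx1 x2 hx2 hne
    obtain ⟨T0, ⟨hT0B, hT0s⟩, hT0u⟩ := hSTS.2 {x1, x2}
      (by rw [Finset.insert_subset_iff]; exact ⟨hx1, by simpa using hx2⟩)
      (Finset.card_pair hne)
    refine ⟨T0.image Sum.inl,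
      ⟨Finset.mem_union_left _ (Finset.mem_image_of_mem _ hT0B), ?_⟩, ?_⟩
    · rw [Finset.insert_subset_iff, Finset.singleton_subset_iff]
      exact ⟨Finset.mem_image_of_mem _ (hT0s (Finset.mem_insert_self _ _)),
        Finset.mem_image_of_mem _ (hT0s (Finset.mem_insert_of_mem (Finset.mem_singleton_self _)))⟩
    · rintro T' ⟨hT', hsub'⟩
      rcases Finset.mem_union.mp hT' with h | h
      · rw [Finset.mem_image] at h
        obtain ⟨T0', hT0', rfl⟩ := h
        have hx1' : x1 ∈ T0' := by
          have h1 := hsub' (Finset.mem_insert_self _ _)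
          rw [Finset.mem_image] at h1
          obtain ⟨x', hx', hxe⟩ := h1
          rwa [← Sum.inl_injective hxe]
        have hx2' : x2 ∈ T0' := by
          have h1 := hsub' (Finset.mem_insert_of_mem (Finset.mem_singleton_self _))
          rw [Finset.mem_image] at h1
          obtain ⟨x', hx', hxe⟩ := h1
          rwa [← Sum.inl_injective hxe]
        have hsubT : ({x1, x2} : Finset α) ⊆ T0' := by
          rw [Finset.insert_subset_iff, Finset.singleton_subset_iff]
          exact ⟨hx1', hx2'⟩
        rw [hT0u T0' ⟨hT0', hsubT⟩]
      · exfalso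
        obtain ⟨idx, e0, he0, rfl⟩ := (hDB T').mp h
        have h1 := hinl_in x1 idx e0 (hsub' (Finset.mem_insert_self _ _))
        have h2 := hinl_in x2 idx e0 (hsub' (Finset.mem_insert_of_mem (Finset.mem_singleton_self _)))
        rw [← h2] at h1
        exact hne (Sum.inl_injective h1)
  have key_new : ∀ y1 y2 : Fin (v+1), y1 ≠ y2 → ∃! T,
      T ∈ (B.image (Finset.image Sum.inl) ∪ doublingBlocks a F) ∧
        ({Sum.inr y1, Sum.inr y2} : Finset (α ⊕ Fin (v+1))) ⊆ T := by
    intro y1 y2 hne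
    have hq12 : π.symm y1 ≠ π.symm y2 := fun h => hne (π.symm.injective h)
    obtain ⟨idx0, hidx0, hiduniq⟩ := pfac_edge r {π.symm y1, π.symm y2}
      (Finset.card_pair hq12)
    refine ⟨insert (a (σ idx0)) (Finset.image ι {π.symm y1, π.symm y2}),
      ⟨Finset.mem_union_right _ ((hDB _).mpr
        ⟨σ idx0, _, by rw [Equiv.symm_apply_apply]; exact hidx0, rfl⟩), ?_⟩, ?_⟩
    · rw [himgpair, Finset.insert_subset_iff, Finset.singleton_subset_iff]
      exact ⟨Finset.mem_insert_of_mem (by simp), Finset.mem_insert_of_mem (by simp)⟩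
    · rintro T' ⟨hT', hsub'⟩
      rcases Finset.mem_union.mp hT' with h | h
      · exfalso
        rw [Finset.mem_image] at h
        obtain ⟨T0', hT0', rfl⟩ := h
        have h1 := hsub' (Finset.mem_insert_self _ _)
        rw [Finset.mem_image] at h1
        obtain ⟨x', -, hxe⟩ := h1
        exact absurd hxe (by simp)
      · obtain ⟨idx, e0, he0, rfl⟩ := (hDB T').mp h
        obtain ⟨q1, hq1, hq1e⟩ := hinr_in y1 idx e0 (hsub' (Finset.mem_insert_self _ _))
        obtain ⟨q2, hq2, hq2e⟩ := hinr_in y2 idx e0 (hsub' (Finset.mem_insert_of_mem (Finset.mem_singleton_self _)))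
        subst hq1e
        subst hq2e
        have hsub0 : ({π.symm y1, π.symm y2} : Finset (Pt r)) ⊆ e0 := by
          rw [Finset.insert_subset_iff, Finset.singleton_subset_iff]
          exact ⟨hq1, hq2⟩
        have he0eq : ({π.symm y1, π.symm y2} : Finset (Pt r)) = e0 :=
          Finset.eq_of_subset_of_card_le hsub0
            (by rw [pfac_card he0, Finset.card_pair hq12])
        have hidxeq : σ.symm idx = idx0 := hiduniq _ (by rw [he0eq]; exact he0)
        have hidx2 : idx = σ idx0 := by rw [← hidxeq, Equiv.apply_symm_apply]
        rw [hidx2, he0eq]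
  have key_mix : ∀ x ∈ V, ∀ y : Fin (v+1), ∃! T,
      T ∈ (B.image (Finset.image Sum.inl) ∪ doublingBlocks a F) ∧
        ({Sum.inl x, Sum.inr y} : Finset (α ⊕ Fin (v+1))) ⊆ T := by
    intro x hx y
    obtain ⟨idx0, hidx0, hidx0u⟩ := ha'rep x hx
    obtain ⟨e0, ⟨he0, hq0⟩, he0u⟩ := pfac_vertex r idx0 (π.symm y)
    have haσ : a (σ idx0) = Sum.inl x := by
      rw [haapp, Equiv.symm_apply_apply, hidx0]
    refine ⟨insert (a (σ idx0)) (Finset.image ι e0),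
      ⟨Finset.mem_union_right _ ((hDB _).mpr
        ⟨σ idx0, e0, by rw [Equiv.symm_apply_apply]; exact he0, rfl⟩), ?_⟩, ?_⟩
    · rw [Finset.insert_subset_iff, Finset.singleton_subset_iff]
      refine ⟨by rw [← haσ]; exact Finset.mem_insert_self _ _, ?_⟩
      refine Finset.mem_insert_of_mem (Finset.mem_image.mpr ⟨π.symm y, hq0, ?_⟩)
      rw [hιapp, Equiv.apply_symm_apply]
    · rintro T' ⟨hT', hsub'⟩
      rcases Finset.mem_union.mp hT' with h | h
      · exfalso
        rw [Finset.mem_image] at h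
        obtain ⟨T0', hT0', rfl⟩ := h
        have h1 := hsub' (Finset.mem_insert_of_mem (Finset.mem_singleton_self _))
        rw [Finset.mem_image] at h1
        obtain ⟨x', -, hxe⟩ := h1
        exact absurd hxe (by simp)
      · obtain ⟨idx, e0', he0', rfl⟩ := (hDB T').mp h
        have h1 := hinl_in x idx e0' (hsub' (Finset.mem_insert_self _ _))
        have hidxeq : σ.symm idx = idx0 := by
          apply hidx0u
          rw [haapp] at h1
          exact (Sum.inl_injective h1).symm
        obtain ⟨q, hq, hqe⟩ := hinr_in y idx e0' (hsub' (Finset.mem_insert_of_mem (Finset.mem_singleton_self _)))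
        subst hqe
        have he0'eq : e0' = e0 := he0u e0' ⟨by rw [hidxeq] at he0'; exact he0', hq⟩
        have hidx2 : idx = σ idx0 := by rw [← hidxeq, Equiv.apply_symm_apply]
        rw [hidx2, he0'eq]
  -- conclusion
  refine ⟨F, a, ψ, ?_, ?_, ?_, ?_, ?_, fun x _ => hψinl x⟩
  · -- a injective
    intro p q h
    rw [haapp, haapp] at h
    exact σ.symm.injective (ha'inj (Sum.inl_injective h))
  · -- image of a
    ext z
    simp only [Finset.mem_image, Finset.mem_univ, true_and]
    constructor
    · rintro ⟨x, hx, rfl⟩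
      obtain ⟨idx0, hidx0, -⟩ := ha'rep x hx
      exact ⟨σ idx0, by rw [haapp, Equiv.symm_apply_apply, hidx0]⟩
    · rintro ⟨idx, rfl⟩
      exact ⟨a' (σ.symm idx), ha'V _, (haapp idx).symm⟩
  · -- one-factorization
    refine ⟨?_, ?_, ?_⟩
    · intro idx e he
      rw [haF, Finset.mem_image] at he
      obtain ⟨e0, he0, rfl⟩ := he
      constructor
      · intro z hz
        rw [Finset.mem_image] at hz
        obtain ⟨q, -, rfl⟩ := hz
        exact Finset.mem_image.mpr ⟨π q, Finset.mem_univ _, (hιapp q).symm⟩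
      · rw [Finset.card_image_of_injective _ hιinj]
        exact pfac_card he0
    · intro idx x hx
      rw [Finset.mem_image] at hx
      obtain ⟨y, -, rfl⟩ := hx
      obtain ⟨e0, ⟨he0, hq⟩, huniq⟩ := pfac_vertex r (σ.symm idx) (π.symm y)
      refine ⟨e0.image ι, ⟨?_, ?_⟩, ?_⟩
      · rw [haF, Finset.mem_image]
        exact ⟨e0, he0, rfl⟩
      · rw [Finset.mem_image]
        exact ⟨π.symm y, hq, by rw [hιapp, Equiv.apply_symm_apply]⟩
      · rintro e' ⟨he', hy'⟩
        rw [haF, Finset.mem_image] at he'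
        obtain ⟨e0', he0', rfl⟩ := he'
        rw [Finset.mem_image] at hy'
        obtain ⟨q', hq', hik⟩ := hy'
        have hq'eq : q' = π.symm y := by
          rw [hιapp] at hik
          have h2 := Sum.inr_injective hik
          rw [← h2, Equiv.symm_apply_apply]
        exact congrArg (Finset.image ι) (huniq e0' ⟨he0', hq'eq ▸ hq'⟩)
    · intro e hsub hcard
      obtain ⟨w1, w2, hw, rfl⟩ := Finset.card_eq_two.mp hcard
      have h1 := hsub (Finset.mem_insert_self _ _)
      rw [Finset.mem_image] at h1
      obtain ⟨y1, -, rfl⟩ := h1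
      have h2 := hsub (Finset.mem_insert_of_mem (Finset.mem_singleton_self _))
      rw [Finset.mem_image] at h2
      obtain ⟨y2, -, rfl⟩ := h2
      have hyne : y1 ≠ y2 := fun h => hw (by rw [h])
      have hq12 : π.symm y1 ≠ π.symm y2 := fun h => hyne (π.symm.injective h)
      obtain ⟨idx0, hidx0, hiduniq⟩ := pfac_edge r {π.symm y1, π.symm y2}
        (Finset.card_pair hq12)
      refine ⟨σ idx0, ?_, ?_⟩
      · show ({Sum.inr y1, Sum.inr y2} : Finset (α ⊕ Fin (v+1))) ∈ F (σ idx0)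
        rw [haF, Finset.mem_image]
        exact ⟨{π.symm y1, π.symm y2},
          by rw [Equiv.symm_apply_apply]; exact hidx0, himgpair y1 y2⟩
      · intro idx' h'
        rw [haF, Finset.mem_image] at h'
        obtain ⟨e0', he0', himg⟩ := h'
        have he0'eq : e0' = {π.symm y1, π.symm y2} :=
          Finset.image_injective hιinj (himg.trans (himgpair y1 y2).symm)
        rw [he0'eq] at he0'
        have h3 := hiduniq _ he0'
        rw [← h3, Equiv.apply_symm_apply]
  · -- STS
    constructor
    · intro T hT
      rcases Finset.mem_union.mp hT with h | h
      · rw [Finset.mem_image] at h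
        obtain ⟨T0, hT0, rfl⟩ := h
        obtain ⟨hTs, hTc⟩ := hSTS.1 T0 hT0
        constructor
        · intro z hz
          rw [Finset.mem_image] at hz
          obtain ⟨x, hxT, rfl⟩ := hz
          exact Finset.mem_union_left _ (Finset.mem_image_of_mem _ (hTs hxT))
        · rw [Finset.card_image_of_injective _ Sum.inl_injective]
          exact hTc
      · obtain ⟨idx, e0, he0, rfl⟩ := (hDB T).mp h
        constructor
        · intro z hz
          rcases Finset.mem_insert.mp hz with h | h
          · subst h
            exact Finset.mem_union_left _
              (Finset.mem_image.mpr ⟨a' (σ.symm idx), ha'V _, (haapp idx).symm⟩)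
          · rw [Finset.mem_image] at h
            obtain ⟨q, -, rfl⟩ := h
            exact Finset.mem_union_right _
              (Finset.mem_image.mpr ⟨π q, Finset.mem_univ _, (hιapp q).symm⟩)
        · rw [Finset.card_insert_of_notMem (hnotmem _ _),
            Finset.card_image_of_injective _ hιinj, pfac_card he0]
    · intro p hp hp2
      obtain ⟨w1, w2, hw, rfl⟩ := Finset.card_eq_two.mp hp2
      have hw1 := hp (Finset.mem_insert_self _ _)
      have hw2 := hp (Finset.mem_insert_of_mem (Finset.mem_singleton_self _))
      rcases Finset.mem_union.mp hw1 with h1 | h1 <;>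
        rcases Finset.mem_union.mp hw2 with h2 | h2
      · rw [Finset.mem_image] at h1 h2
        obtain ⟨x1, hx1, rfl⟩ := h1
        obtain ⟨x2, hx2, rfl⟩ := h2
        exact key_old x1 hx1 x2 hx2 (fun h => hw (by rw [h]))
      · rw [Finset.mem_image] at h1 h2
        obtain ⟨x1, hx1, rfl⟩ := h1
        obtain ⟨y2, -, rfl⟩ := h2
        exact key_mix x1 hx1 y2
      · rw [Finset.mem_image] at h1 h2
        obtain ⟨y1, -, rfl⟩ := h1
        obtain ⟨x2, hx2, rfl⟩ := h2
        rw [Finset.pair_comm]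
        exact key_mix x2 hx2 y1
      · rw [Finset.mem_image] at h1 h2
        obtain ⟨y1, -, rfl⟩ := h1
        obtain ⟨y2, -, rfl⟩ := h2
        exact key_new y1 y2 (fun h => hw (by rw [h]))
  · -- strict bicoloring
    constructor
    · intro T hT
      rcases Finset.mem_union.mp hT with h | h
      · rw [Finset.mem_image] at h
        obtain ⟨T0, hT0, rfl⟩ := h
        rw [Finset.image_image]
        have hcomp : ψ ∘ Sum.inl = φ := by
          funext x
          exact hψinl x
        rw [hcomp]
        exact hφ.1 T0 hT0
      · obtain ⟨idx, e0, he0, rfl⟩ := (hDB T).mp h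
        rw [Finset.image_insert, Finset.image_image]
        have himgψ : Finset.image (ψ ∘ ι) e0 =
            Finset.image (fun q : Pt r => if q.1 = 0 then i else j) e0 :=
          Finset.image_congr (fun q _ => hψι q)
        rw [himgψ, haapp, hψinl]
        rcases hcase : σ.symm idx with t | u
        · rw [hcase] at he0
          rw [pfac_inl, mem_bfac] at he0
          obtain ⟨y, rfl⟩ := he0
          rw [Finset.image_insert, Finset.image_singleton]
          rw [show (((0 : Fin 2), y)).1 = (0 : Fin 2) from rfl,
            show (((1 : Fin 2), y + t)).1 = (1 : Fin 2) from rfl,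
            if_pos rfl, if_neg (by decide : ¬(1 : Fin 2) = 0)]
          rw [Finset.insert_eq_self.mpr (by
            rcases ha'cond1 t with h | h <;> rw [h] <;> simp)]
          exact Finset.card_pair hij
        · rw [hcase] at he0
          rw [pfac_inr, mem_wfac] at he0
          obtain ⟨c, eo, heo, rfl⟩ := he0
          have heone : eo.Nonempty := by
            rw [← Finset.card_pos, oedges_card heo]
            norm_num
          have hsing : Finset.image (fun q : Pt r => if q.1 = 0 then i else j)
              (eo.image (side r c)) = {if c = 0 then i else j} := by
            rw [Finset.image_image]
            rw [Finset.eq_singleton_iff_nonempty_unique_mem]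
            refine ⟨heone.image _, ?_⟩
            intro b hb
            rw [Finset.mem_image] at hb
            obtain ⟨o, -, rfl⟩ := hb
            rfl
          rw [hsing]
          have hc0 : φ (a' (Sum.inr u)) ∉ ({if c = 0 then i else j} : Finset (Fin k)) := by
            rw [Finset.mem_singleton]
            intro hcon
            apply ha'cond2 u
            by_cases hc : c = 0
            · rw [if_pos hc] at hcon
              exact Or.inl hcon
            · rw [if_neg hc] at hcon
              exact Or.inr hcon
          rw [Finset.card_insert_of_notMem hc0, Finset.card_singleton]
    · intro c
      obtain ⟨x, hx, hc⟩ := hφ.2 c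
      exact ⟨Sum.inl x, Finset.mem_union_left _ (Finset.mem_image_of_mem _ hx),
        by rw [hψinl, hc]⟩
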